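/- Let k ∈ {−1,0,1}, ε, n ∈ {0,1} with εn = εk = 0, and let a, b : ℝ → (0,∞) be C¹. Then the vector field η₃ with components (η₃⁰, η₃¹, η₃², η₃³) = e^{εz}(0, sin φ, f(r) cos φ, g(r) cos φ) in coordinates (t,r,φ,z) is a Killing vector field of the metric G on U = {(t,r,φ,z) : Σ(r,k) > 0}, i.e. for all indices α, β ∈ {0,1,2,3} and all points of U: Σ_μ (η₃^μ ∂_μ G_{αβ} + G_{μβ} ∂_α η₃^μ + G_{αμ} ∂_β η₃^μ) = 0. -/

import Mathlib

/-- `Σ(y,k)`: `sin y` for `k = 1`, `y` for `k = 0`, `sinh y` for `k = −1`. -/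
noncomputable def Sig (k y : ℝ) : ℝ :=
  if k = 1 then Real.sin y else if k = 0 then y else Real.sinh y

/-- `Σ_{,y}(y,k)`: `cos y` for `k = 1`, `1` for `k = 0`, `cosh y` for `k = −1`. -/
noncomputable def Sigr (k y : ℝ) : ℝ :=
  if k = 1 then Real.cos y else if k = 0 then 1 else Real.cosh y

/-- `F(y,k)`: `−cos y` for `k = 1`, `y²/2` for `k = 0`, `cosh y` for `k = −1`. -/
noncomputable def Ffun (k y : ℝ) : ℝ :=
  if k = 1 then -Real.cos y else if k = 0 then y ^ 2 / 2 else Real.cosh y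

/-- `f(r) = Σ_{,r}(r,k)/Σ(r,k)`. -/
noncomputable def ffun (k r : ℝ) : ℝ := Sigr k r / Sig k r

/-- `g(r) = n(Σ(r,k) − f(r)(F(r,k)+k))`. -/
noncomputable def gfun (k n r : ℝ) : ℝ :=
  n * (Sig k r - ffun k r * (Ffun k r + k))

/-- Coefficient matrix of the cylindrical LRS line element
`−dt² + a²(dz + n(F(r,k)+k)dφ)² + b²[(dr − εr dz)² + Σ(r,k)²dφ²]` in coordinates
`(t,r,φ,z) = (q 0, q 1, q 2, q 3)`. -/
noncomputable def gcyl (k ε n : ℝ) (a b : ℝ → ℝ) (q : Fin 4 → ℝ) :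
    Matrix (Fin 4) (Fin 4) ℝ :=
  !![-1, 0, 0, 0;
     0, (b (q 0)) ^ 2, 0, -ε * q 1 * (b (q 0)) ^ 2;
     0, 0, (a (q 0)) ^ 2 * (n * (Ffun k (q 1) + k)) ^ 2 +
       (b (q 0)) ^ 2 * (Sig k (q 1)) ^ 2,
       (a (q 0)) ^ 2 * n * (Ffun k (q 1) + k);
     0, -ε * q 1 * (b (q 0)) ^ 2, (a (q 0)) ^ 2 * n * (Ffun k (q 1) + k),
       (a (q 0)) ^ 2 + ε ^ 2 * (q 1) ^ 2 * (b (q 0)) ^ 2]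

/-- A vector field `X` is a Killing vector field of the metric components `G` at the
point `q` if `Σ_μ (X^μ ∂_μ G_{αβ} + G_{μβ} ∂_α X^μ + G_{αμ} ∂_β X^μ) = 0` for all
`α, β`, where `∂_μ` is the partial derivative in the `μ`-th coordinate direction. -/
def IsKillingAt (G : (Fin 4 → ℝ) → Matrix (Fin 4) (Fin 4) ℝ)
    (X : (Fin 4 → ℝ) → (Fin 4 → ℝ)) (q : Fin 4 → ℝ) : Prop :=
  ∀ α β : Fin 4,
    (∑ μ : Fin 4,
      (X q μ * fderiv ℝ (fun p => G p α β) q (Pi.single μ 1) +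
        G q μ β * fderiv ℝ (fun p => X p μ) q (Pi.single α 1) +
        G q α μ * fderiv ℝ (fun p => X p μ) q (Pi.single β 1))) = 0

/-- The vector field `η₃ = e^{εz}[sin φ ∂_r + cos φ(f(r)∂_φ + g(r)∂_z)]` in coordinates
`(t,r,φ,z)`. -/
noncomputable def eta3 (k ε n : ℝ) (q : Fin 4 → ℝ) : Fin 4 → ℝ :=
  ![0, Real.exp (ε * q 3) * Real.sin (q 2),
    Real.exp (ε * q 3) * ffun k (q 1) * Real.cos (q 2),
    Real.exp (ε * q 3) * gfun k n (q 1) * Real.cos (q 2)]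

lemma hasDerivAt_Sig (k r : ℝ) : HasDerivAt (Sig k) (Sigr k r) r := by
  unfold Sig Sigr
  rcases eq_or_ne k 1 with h | h
  · simpa [h] using Real.hasDerivAt_sin r
  · rcases eq_or_ne k 0 with h0 | h0
    · simpa [h, h0] using hasDerivAt_id' r
    · simpa [h, h0] using Real.hasDerivAt_sinh r

lemma hasDerivAt_Sigr (k r : ℝ) (hk : k = -1 ∨ k = 0 ∨ k = 1) :
    HasDerivAt (Sigr k) (-(k * Sig k r)) r := by
  unfold Sig Sigr
  rcases hk with h | h | h <;> subst h <;> norm_num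
  · simpa using Real.hasDerivAt_cosh r
  · exact hasDerivAt_const r 1
  · simpa using Real.hasDerivAt_cos r

lemma hasDerivAt_Ffun (k r : ℝ) : HasDerivAt (Ffun k) (Sig k r) r := by
  unfold Sig Ffun
  rcases eq_or_ne k 1 with h | h
  · simpa [h] using (Real.hasDerivAt_cos r).fun_neg
  · rcases eq_or_ne k 0 with h0 | h0
    · simpa [h, h0] using (((hasDerivAt_id r).pow 2).div_const 2)
    · simpa [h, h0] using Real.hasDerivAt_cosh r

lemma Py (k r : ℝ) (hk : k = -1 ∨ k = 0 ∨ k = 1) :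
    Sigr k r ^ 2 + k * Sig k r ^ 2 = 1 := by
  unfold Sig Sigr
  rcases hk with h | h | h <;> subst h
  · norm_num; nlinarith [Real.cosh_sq r]
  · norm_num
  · norm_num [add_comm, Real.sin_sq_add_cos_sq]

noncomputable def prj (i : Fin 4) : (Fin 4 → ℝ) →L[ℝ] ℝ := ContinuousLinearMap.proj i

lemma hfd_coord {u : ℝ → ℝ} {c : ℝ} {i : Fin 4} {q : Fin 4 → ℝ} (h : HasDerivAt u c (q i)) :
    HasFDerivAt (fun p : Fin 4 → ℝ => u (p i)) (c • prj i) q :=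
  h.comp_hasFDerivAt q ((prj i).hasFDerivAt)

lemma hasDerivAt_ffun (k r : ℝ) (hk : k = -1 ∨ k = 0 ∨ k = 1) (hS : Sig k r ≠ 0) :
    HasDerivAt (ffun k) (-(k + ffun k r ^ 2)) r := by
  have h := (hasDerivAt_Sigr k r hk).fun_div (hasDerivAt_Sig k r) hS
  have he : ffun k = fun y => Sigr k y / Sig k y := rfl
  rw [he]
  refine h.congr_deriv ?_
  field_simp [ffun]
  ring

set_option maxHeartbeats 2000000 in
lemma branch1 (k n : ℝ)
    (hk : k = -1 ∨ k = 0 ∨ k = 1) (hn : n = 0 ∨ n = 1)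
    (a b : ℝ → ℝ) (ha : ContDiff ℝ 1 a) (hb : ContDiff ℝ 1 b) :
    ∀ q : Fin 4 → ℝ, 0 < Sig k (q 1) →
      IsKillingAt (gcyl k 0 n a b) (eta3 k 0 n) q := by
  intro q hS α β
  have e2 : (⟨2, by norm_num⟩ : Fin 4) = 2 := rfl
  have e3 : (⟨3, by norm_num⟩ : Fin 4) = 3 := rfl
  have hSne : Sig k (q 1) ≠ 0 := ne_of_gt hS
  have hC : Sigr k (q 1) = ffun k (q 1) * Sig k (q 1) := by unfold ffun; field_simp
  have hfk : (ffun k (q 1) ^ 2 + k) * Sig k (q 1) ^ 2 = 1 := by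
    have h := Py k (q 1) hk; rw [hC] at h; linear_combination h
  have ha' : HasDerivAt a (deriv a (q 0)) (q 0) := (ha.differentiable one_ne_zero (q 0)).hasDerivAt
  have hb' : HasDerivAt b (deriv b (q 0)) (q 0) := (hb.differentiable one_ne_zero (q 0)).hasDerivAt
  have hf' := hasDerivAt_ffun k (q 1) hk hSne
  have hFk := (hasDerivAt_Ffun k (q 1)).add_const k
  have hg' : HasDerivAt (gfun k n) (n * ((k + ffun k (q 1) ^ 2) * (Ffun k (q 1) + k))) (q 1) := by
    have hgg := ((hasDerivAt_Sig k (q 1)).sub (hf'.mul hFk)).const_mul n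
    have he : gfun k n = fun y => n * (Sig k y - ffun k y * (Ffun k y + k)) := rfl
    rw [he]
    refine hgg.congr_deriv ?_
    rw [hC]; ring
  -- directional derivative lemmas
  have dsin : ∀ μ : Fin 4, fderiv ℝ (fun p : Fin 4 → ℝ => Real.sin (p 2)) q (Pi.single μ 1)
      = Real.cos (q 2) * (Pi.single μ 1 : Fin 4 → ℝ) 2 := by
    intro μ; rw [(hfd_coord (Real.hasDerivAt_sin (q 2))).fderiv]; simp [prj]
  have dX2 : ∀ μ : Fin 4, fderiv ℝ (fun p : Fin 4 → ℝ => ffun k (p 1) * Real.cos (p 2)) q (Pi.single μ 1)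
      = ffun k (q 1) * (-Real.sin (q 2)) * (Pi.single μ 1 : Fin 4 → ℝ) 2
        + Real.cos (q 2) * (-(k + ffun k (q 1) ^ 2)) * (Pi.single μ 1 : Fin 4 → ℝ) 1 := by
    intro μ
    rw [((hfd_coord hf').fun_mul (hfd_coord (Real.hasDerivAt_cos (q 2)))).fderiv]
    simp [prj]; try ring
  have dX3 : ∀ μ : Fin 4, fderiv ℝ (fun p : Fin 4 → ℝ => gfun k n (p 1) * Real.cos (p 2)) q (Pi.single μ 1)
      = gfun k n (q 1) * (-Real.sin (q 2)) * (Pi.single μ 1 : Fin 4 → ℝ) 2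
        + Real.cos (q 2) * (n * ((k + ffun k (q 1) ^ 2) * (Ffun k (q 1) + k))) * (Pi.single μ 1 : Fin 4 → ℝ) 1 := by
    intro μ
    rw [((hfd_coord hg').fun_mul (hfd_coord (Real.hasDerivAt_cos (q 2)))).fderiv]
    simp [prj]; try ring
  have db2 : ∀ μ : Fin 4, fderiv ℝ (fun p : Fin 4 → ℝ => b (p 0) ^ 2) q (Pi.single μ 1)
      = 2 * b (q 0) * deriv b (q 0) * (Pi.single μ 1 : Fin 4 → ℝ) 0 := by
    intro μ; rw [(hfd_coord (hb'.fun_pow 2)).fderiv]; simp [prj]; try ring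
  have da2 : ∀ μ : Fin 4, fderiv ℝ (fun p : Fin 4 → ℝ => a (p 0) ^ 2) q (Pi.single μ 1)
      = 2 * a (q 0) * deriv a (q 0) * (Pi.single μ 1 : Fin 4 → ℝ) 0 := by
    intro μ; rw [(hfd_coord (ha'.fun_pow 2)).fderiv]; simp [prj]; try ring
  have dG23 : ∀ μ : Fin 4, fderiv ℝ (fun p : Fin 4 → ℝ => a (p 0) ^ 2 * n * (Ffun k (p 1) + k)) q (Pi.single μ 1)
      = a (q 0) ^ 2 * n * Sig k (q 1) * (Pi.single μ 1 : Fin 4 → ℝ) 1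
        + 2 * a (q 0) * deriv a (q 0) * n * (Ffun k (q 1) + k) * (Pi.single μ 1 : Fin 4 → ℝ) 0 := by
    intro μ
    rw [((hfd_coord ((ha'.fun_pow 2).mul_const n)).fun_mul (hfd_coord hFk)).fderiv]
    simp [prj]; try ring
  have dG22 : ∀ μ : Fin 4, fderiv ℝ
      (fun p : Fin 4 → ℝ => a (p 0) ^ 2 * (n * (Ffun k (p 1) + k)) ^ 2 + b (p 0) ^ 2 * Sig k (p 1) ^ 2) q (Pi.single μ 1)
      = (2 * a (q 0) * deriv a (q 0) * (n * (Ffun k (q 1) + k)) ^ 2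
          + 2 * b (q 0) * deriv b (q 0) * Sig k (q 1) ^ 2) * (Pi.single μ 1 : Fin 4 → ℝ) 0
        + (a (q 0) ^ 2 * (2 * (n * (Ffun k (q 1) + k)) * (n * Sig k (q 1)))
          + b (q 0) ^ 2 * (2 * Sig k (q 1) * (ffun k (q 1) * Sig k (q 1)))) * (Pi.single μ 1 : Fin 4 → ℝ) 1 := by
    intro μ
    rw [(((hfd_coord (ha'.fun_pow 2)).fun_mul (hfd_coord ((hFk.const_mul n).fun_pow 2))).fun_add
        ((hfd_coord (hb'.fun_pow 2)).fun_mul (hfd_coord ((hasDerivAt_Sig k (q 1)).fun_pow 2)))).fderiv]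
    simp [prj]
    linear_combination (b (q 0) ^ 2 * 2 * Sig k (q 1) * (Pi.single μ 1 : Fin 4 → ℝ) 1) * hC
  fin_cases α <;> fin_cases β <;>
    simp only [gcyl, eta3, Fin.sum_univ_four, e2, e3, Fin.mk_zero, Fin.mk_one, Fin.isValue,
      Matrix.cons_val', Matrix.cons_val_zero, Matrix.cons_val_one, Matrix.cons_val_two,
      Matrix.cons_val_three, Matrix.head_cons, Matrix.tail_cons, Matrix.empty_val',
      Matrix.cons_val_fin_one, Matrix.of_apply, Matrix.head_fin_const,
      zero_mul, mul_zero, neg_zero, zero_add, add_zero, one_mul, mul_one,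
      Real.exp_zero, zero_pow, OfNat.ofNat_ne_zero, ne_eq, not_false_iff,
      fderiv_const, Pi.zero_apply, ContinuousLinearMap.zero_apply,
      dsin, dX2, dX3, db2, da2, dG23, dG22] <;>
    simp [Pi.single_apply, gfun] <;>
    try ring
  all_goals linear_combination (-(b (q 0) ^ 2 * Real.cos (q 2))) * hfk

set_option maxHeartbeats 2000000 in
lemma branch2 (a b : ℝ → ℝ) (ha : ContDiff ℝ 1 a) (hb : ContDiff ℝ 1 b) :
    ∀ q : Fin 4 → ℝ, 0 < Sig 0 (q 1) →
      IsKillingAt (gcyl 0 1 0 a b) (eta3 0 1 0) q := by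
  intro q hS α β
  have e2 : (⟨2, by norm_num⟩ : Fin 4) = 2 := rfl
  have e3 : (⟨3, by norm_num⟩ : Fin 4) = 3 := rfl
  have h0 : Sig 0 = fun y => y := by funext y; simp [Sig]
  have h1 : Sigr 0 = fun _ => (1:ℝ) := by funext y; simp [Sigr]
  have h2 : Ffun 0 = fun y => y ^ 2 / 2 := by funext y; simp [Ffun]
  have hff : ffun 0 = fun y => y⁻¹ := by funext y; simp [ffun, h0, h1, one_div]
  have hgg : gfun 0 0 = fun _ => (0:ℝ) := by funext y; simp [gfun]
  have hr : q 1 ≠ 0 := by rw [h0] at hS; exact ne_of_gt hS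
  have ha' : HasDerivAt a (deriv a (q 0)) (q 0) := (ha.differentiable one_ne_zero (q 0)).hasDerivAt
  have hb' : HasDerivAt b (deriv b (q 0)) (q 0) := (hb.differentiable one_ne_zero (q 0)).hasDerivAt
  have dX1 : ∀ μ : Fin 4, fderiv ℝ (fun p : Fin 4 → ℝ => Real.exp (p 3) * Real.sin (p 2)) q (Pi.single μ 1)
      = Real.exp (q 3) * Real.cos (q 2) * (Pi.single μ 1 : Fin 4 → ℝ) 2
        + Real.sin (q 2) * Real.exp (q 3) * (Pi.single μ 1 : Fin 4 → ℝ) 3 := by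
    intro μ
    rw [((hfd_coord (Real.hasDerivAt_exp (q 3))).fun_mul (hfd_coord (Real.hasDerivAt_sin (q 2)))).fderiv]
    simp [prj]; try ring
  have dX2 : ∀ μ : Fin 4, fderiv ℝ (fun p : Fin 4 → ℝ => Real.exp (p 3) * (p 1)⁻¹ * Real.cos (p 2)) q (Pi.single μ 1)
      = Real.exp (q 3) * (q 1)⁻¹ * (-Real.sin (q 2)) * (Pi.single μ 1 : Fin 4 → ℝ) 2
        + Real.cos (q 2) * (Real.exp (q 3) * (-(q 1 ^ 2)⁻¹)) * (Pi.single μ 1 : Fin 4 → ℝ) 1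
        + Real.cos (q 2) * ((q 1)⁻¹ * Real.exp (q 3)) * (Pi.single μ 1 : Fin 4 → ℝ) 3 := by
    intro μ
    rw [(((hfd_coord (Real.hasDerivAt_exp (q 3))).fun_mul (hfd_coord (hasDerivAt_inv hr))).fun_mul
        (hfd_coord (Real.hasDerivAt_cos (q 2)))).fderiv]
    simp [prj]; try ring
  have db2 : ∀ μ : Fin 4, fderiv ℝ (fun p : Fin 4 → ℝ => b (p 0) ^ 2) q (Pi.single μ 1)
      = 2 * b (q 0) * deriv b (q 0) * (Pi.single μ 1 : Fin 4 → ℝ) 0 := by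
    intro μ; rw [(hfd_coord (hb'.fun_pow 2)).fderiv]; simp [prj]; try ring
  have dG13 : ∀ μ : Fin 4, fderiv ℝ (fun p : Fin 4 → ℝ => -(p 1 * b (p 0) ^ 2)) q (Pi.single μ 1)
      = -(b (q 0) ^ 2 * (Pi.single μ 1 : Fin 4 → ℝ) 1
          + q 1 * (2 * b (q 0) * deriv b (q 0)) * (Pi.single μ 1 : Fin 4 → ℝ) 0) := by
    intro μ
    rw [(((hfd_coord ((hasDerivAt_id' (x := q 1)))).fun_mul (hfd_coord (hb'.fun_pow 2))).fun_neg).fderiv]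
    simp [prj]; try ring
  have dG22 : ∀ μ : Fin 4, fderiv ℝ (fun p : Fin 4 → ℝ => b (p 0) ^ 2 * p 1 ^ 2) q (Pi.single μ 1)
      = b (q 0) ^ 2 * (2 * q 1) * (Pi.single μ 1 : Fin 4 → ℝ) 1
        + q 1 ^ 2 * (2 * b (q 0) * deriv b (q 0)) * (Pi.single μ 1 : Fin 4 → ℝ) 0 := by
    intro μ
    rw [((hfd_coord (hb'.fun_pow 2)).fun_mul (hfd_coord (((hasDerivAt_id' (x := q 1))).fun_pow 2))).fderiv]
    simp [prj]; try ring
  have dG33 : ∀ μ : Fin 4, fderiv ℝ (fun p : Fin 4 → ℝ => a (p 0) ^ 2 + p 1 ^ 2 * b (p 0) ^ 2) q (Pi.single μ 1)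
      = 2 * a (q 0) * deriv a (q 0) * (Pi.single μ 1 : Fin 4 → ℝ) 0
        + (2 * q 1 * b (q 0) ^ 2 * (Pi.single μ 1 : Fin 4 → ℝ) 1
          + q 1 ^ 2 * (2 * b (q 0) * deriv b (q 0)) * (Pi.single μ 1 : Fin 4 → ℝ) 0) := by
    intro μ
    rw [((hfd_coord (ha'.fun_pow 2)).fun_add
        ((hfd_coord (((hasDerivAt_id' (x := q 1))).fun_pow 2)).fun_mul (hfd_coord (hb'.fun_pow 2)))).fderiv]
    simp [prj]; try ring
  fin_cases α <;> fin_cases β <;>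
    simp only [gcyl, eta3, Fin.sum_univ_four, e2, e3, Fin.mk_zero, Fin.mk_one, Fin.isValue,
      h0, h1, h2, hff, hgg,
      Matrix.cons_val', Matrix.cons_val_zero, Matrix.cons_val_one, Matrix.cons_val_two,
      Matrix.cons_val_three, Matrix.head_cons, Matrix.tail_cons, Matrix.empty_val',
      Matrix.cons_val_fin_one, Matrix.of_apply, Matrix.head_fin_const,
      zero_mul, mul_zero, neg_zero, zero_add, add_zero, one_mul, mul_one, one_pow, neg_mul,
      zero_pow, OfNat.ofNat_ne_zero, ne_eq, not_false_iff,
      fderiv_const, Pi.zero_apply, ContinuousLinearMap.zero_apply,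
      dX1, dX2, db2, dG13, dG22, dG33] <;>
    (try simp [Pi.single_apply]) <;> (try field_simp) <;> (try ring)

/-- `η₃` is a Killing vector field of the LRS metric `gcyl` on the region
`U = {Σ(r,k) > 0}`. -/
theorem eta3_is_killing (k ε n : ℝ)
    (hk : k = -1 ∨ k = 0 ∨ k = 1) (hε : ε = 0 ∨ ε = 1) (hn : n = 0 ∨ n = 1)
    (hεn : ε * n = 0) (hεk : ε * k = 0)
    (a b : ℝ → ℝ) (ha : ContDiff ℝ 1 a) (hb : ContDiff ℝ 1 b)
    (hapos : ∀ t, 0 < a t) (hbpos : ∀ t, 0 < b t) :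
    ∀ q : Fin 4 → ℝ, 0 < Sig k (q 1) →
      IsKillingAt (gcyl k ε n a b) (eta3 k ε n) q := by
  rcases hε with h | h
  · subst h
    exact branch1 k n hk hn a b ha hb
  · subst h
    have hn0 : n = 0 := by simpa using hεn
    have hk0 : k = 0 := by simpa using hεk
    subst hn0; subst hk0
    exact branch2 a b ha hb
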